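/- For any real numbers s and f with |f| ≤ F, and positive constants ρ₁, ρ₂, m, the quantity (1/m)·(s·f + s·u) with u = -(F + ρ₁/√2)·sign(s) - ρ₂·s satisfies (1/m)·(s·f + s·u) ≤ -(ρ₁/m)·(|s|/√2) - (2ρ₂/m)·(s²/2). -/
import Mathlib

open Real

theorem stmt_2 (s f F ρ₁ ρ₂ m : ℝ) (hf : |f| ≤ F) (hρ₁ : 0 < ρ₁) (hρ₂ : 0 < ρ₂) (hm : 0 < m) :
    (1 / m) * (s * f + s * (-(F + ρ₁ / Real.sqrt 2) * Real.sign s - ρ₂ * s)) ≤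
      -(ρ₁ / m) * (|s| / Real.sqrt 2) - (2 * ρ₂ / m) * (s ^ 2 / 2) := by
  have hsgn : s * Real.sign s = |s| := by
    rcases lt_trichotomy s 0 with h | h | h
    · rw [Real.sign_of_neg h, abs_of_neg h]; ring
    · simp [h]
    · rw [Real.sign_of_pos h, abs_of_pos h]; ring
  have hsf : s * f ≤ |s| * F := by
    calc s * f ≤ |s * f| := le_abs_self _
    _ = |s| * |f| := abs_mul s f
    _ ≤ |s| * F := by exact mul_le_mul_of_nonneg_left hf (abs_nonneg s)
  have key : s * f + s * (-(F + ρ₁ / Real.sqrt 2) * Real.sign s - ρ₂ * s) ≤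
      -ρ₁ * (|s| / Real.sqrt 2) - 2 * ρ₂ * (s ^ 2 / 2) := by
    have : s * (-(F + ρ₁ / Real.sqrt 2) * Real.sign s - ρ₂ * s)
        = -(F + ρ₁ / Real.sqrt 2) * |s| - ρ₂ * s ^ 2 := by
      rw [← hsgn]; ring
    rw [this]
    have h2 : ρ₁ / Real.sqrt 2 * |s| = ρ₁ * (|s| / Real.sqrt 2) := by ring
    nlinarith [hsf]
  have h1 : (0:ℝ) < 1 / m := by positivity
  calc (1 / m) * (s * f + s * (-(F + ρ₁ / Real.sqrt 2) * Real.sign s - ρ₂ * s))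
      ≤ (1 / m) * (-ρ₁ * (|s| / Real.sqrt 2) - 2 * ρ₂ * (s ^ 2 / 2)) :=
        mul_le_mul_of_nonneg_left key h1.le
    _ = -(ρ₁ / m) * (|s| / Real.sqrt 2) - (2 * ρ₂ / m) * (s ^ 2 / 2) := by ring
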